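/- arXiv:0801.1855 — 2 statements merged into one kernel-verified Lean document; each statement's English description precedes it below -/
import Mathlib

section
/- Let 0 < λ < 1/2, let ℓ₀ > ℓ₁ > … > ℓ_n > 0 satisfy ℓ_{k+1} < λℓ_k, and let E_n ⊂ ℝ^d be the n-th generation corner Cantor set consisting of N = 2^{nd} cubes Q_j^n of edge length ℓ_n (at each step each cube of edge ℓ_k contains 2^d corner cubes of edge ℓ_{k+1}). Let m be the natural probability measure giving mass 2^{−nd} uniformly to each Q_j^n. Then for every x ∈ ℝ^d and 0 < s < d: ∫₀^∞ [m(B(x,r))/r^s]² dr/r ≤ C(d,s) Σ_{k=0}^n θ_k², where θ_k = 2^{−kd}/ℓ_k^s. -/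
open MeasureTheory Set

namespace Stmt13Aux

open scoped Classical

/-- telescoping -/
lemma sum_tel (ℓ : ℕ → ℝ) {a b : ℕ} (h : a ≤ b) :
    ∑ k ∈ Finset.Ico a b, (ℓ k - ℓ (k+1)) = ℓ a - ℓ b := by
  induction b, h using Nat.le_induction with
  | base => simp
  | succ b hab ih => rw [Finset.sum_Ico_succ_top hab, ih]; ring

/-- column sum -/
noncomputable def colS (ℓ : ℕ → ℝ) (g : ℕ) (b : ℕ → Bool) : ℝ :=
  ∑ k ∈ Finset.range g, if b k then ℓ k - ℓ (k+1) else 0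

lemma colS_nonneg {ℓ : ℕ → ℝ} {n : ℕ} (hmono : ∀ k, k < n → ℓ (k+1) ≤ ℓ k)
    {g : ℕ} (hg : g ≤ n) (b : ℕ → Bool) : 0 ≤ colS ℓ g b := by
  refine Finset.sum_nonneg fun k hk => ?_
  have := hmono k (lt_of_lt_of_le (Finset.mem_range.1 hk) hg)
  split <;> linarith

lemma colS_le {ℓ : ℕ → ℝ} {n : ℕ} (hmono : ∀ k, k < n → ℓ (k+1) ≤ ℓ k)
    {g : ℕ} (hg : g ≤ n) (b : ℕ → Bool) : colS ℓ g b ≤ ℓ 0 - ℓ g := by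
  rw [colS, Finset.range_eq_Ico, ← sum_tel ℓ (Nat.zero_le g)]
  refine Finset.sum_le_sum fun k hk => ?_
  have := hmono k (lt_of_lt_of_le (Finset.mem_Ico.1 hk).2 hg)
  split <;> linarith

/-- colS splits -/
lemma colS_split (ℓ : ℕ → ℝ) {g n : ℕ} (hg : g ≤ n) (b : ℕ → Bool) :
    colS ℓ n b = colS ℓ g b + ∑ k ∈ Finset.Ico g n, (if b k then ℓ k - ℓ (k+1) else 0) := by
  rw [colS, colS, Finset.range_eq_Ico,
    ← Finset.sum_Ico_consecutive _ (Nat.zero_le g) hg, ← Finset.range_eq_Ico]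

lemma tail_bounds {ℓ : ℕ → ℝ} {n : ℕ} (hmono : ∀ k, k < n → ℓ (k+1) ≤ ℓ k)
    {g : ℕ} (hg : g ≤ n) (b : ℕ → Bool) :
    colS ℓ g b ≤ colS ℓ n b ∧ colS ℓ n b ≤ colS ℓ g b + (ℓ g - ℓ n) := by
  rw [colS_split ℓ hg b]
  constructor
  · have : (0:ℝ) ≤ ∑ k ∈ Finset.Ico g n, (if b k then ℓ k - ℓ (k+1) else 0) := by
      refine Finset.sum_nonneg fun k hk => ?_
      have := hmono k (Finset.mem_Ico.1 hk).2
      split <;> linarith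
    linarith
  · have : ∑ k ∈ Finset.Ico g n, (if b k then ℓ k - ℓ (k+1) else 0) ≤ ℓ g - ℓ n := by
      rw [← sum_tel ℓ hg]
      refine Finset.sum_le_sum fun k hk => ?_
      have := hmono k (Finset.mem_Ico.1 hk).2
      split <;> linarith
    linarith

/-- gap lemma, ordered version -/
lemma gap_aux {ℓ : ℕ → ℝ} {n : ℕ} (hdbl : ∀ k, k < n → 2 * ℓ (k+1) < ℓ k)
    {g : ℕ} (hg : g ≤ n) (b b' : ℕ → Bool) {k0 : ℕ} (hk0 : k0 < g)
    (hmono : ∀ k, k < n → ℓ (k+1) ≤ ℓ k)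
    (hb : b k0 = true) (hb' : b' k0 = false) (hmin : ∀ k, k < k0 → b k = b' k) :
    ℓ g < colS ℓ g b - colS ℓ g b' := by
  have hsplit : ∀ c : ℕ → Bool, colS ℓ g c =
      (∑ k ∈ Finset.Ico 0 k0, if c k then ℓ k - ℓ (k+1) else 0)
        + (if c k0 then ℓ k0 - ℓ (k0+1) else 0)
        + ∑ k ∈ Finset.Ico (k0+1) g, (if c k then ℓ k - ℓ (k+1) else 0) := by
    intro c
    rw [colS, Finset.range_eq_Ico, ← Finset.sum_Ico_consecutive _ (Nat.zero_le k0) hk0.le,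
      Finset.sum_eq_sum_Ico_succ_bot hk0]
    ring
  rw [hsplit b, hsplit b', hb, hb']
  have heq : (∑ k ∈ Finset.range k0, if b k then ℓ k - ℓ (k+1) else 0)
      = ∑ k ∈ Finset.range k0, if b' k then ℓ k - ℓ (k+1) else 0 := by
    refine Finset.sum_congr rfl fun k hk => ?_
    rw [hmin k (Finset.mem_range.1 hk)]
  have h1 : ∑ k ∈ Finset.Ico (k0+1) g, (if b k then ℓ k - ℓ (k+1) else 0) ≥ 0 := by
    refine Finset.sum_nonneg fun k hk => ?_
    obtain ⟨hk1, hk2⟩ := Finset.mem_Ico.1 hk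
    have := hmono k (lt_of_lt_of_le hk2 hg)
    split <;> linarith
  have h2 : ∑ k ∈ Finset.Ico (k0+1) g, (if b' k then ℓ k - ℓ (k+1) else 0)
      ≤ ℓ (k0+1) - ℓ g := by
    rw [← sum_tel ℓ (by omega : k0+1 ≤ g)]
    refine Finset.sum_le_sum fun k hk => ?_
    have := hmono k (lt_of_lt_of_le (Finset.mem_Ico.1 hk).2 hg)
    split <;> linarith
  have h3 := hdbl k0 (lt_of_lt_of_le hk0 hg)
  norm_num
  linarith


lemma gap {ℓ : ℕ → ℝ} {n : ℕ} (hdbl : ∀ k, k < n → 2 * ℓ (k+1) < ℓ k)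
    (hmono : ∀ k, k < n → ℓ (k+1) ≤ ℓ k)
    {g : ℕ} (hg : g ≤ n) (b b' : ℕ → Bool)
    (hne : ∃ k, k < g ∧ b k ≠ b' k) : ℓ g < |colS ℓ g b - colS ℓ g b'| := by
  classical
  obtain ⟨k, hkg, hkne⟩ := hne
  have hP : ∃ k, b k ≠ b' k := ⟨k, hkne⟩
  set k0 := Nat.find hP with hk0def
  have hk0 : b k0 ≠ b' k0 := Nat.find_spec hP
  have hk0g : k0 < g := lt_of_le_of_lt (Nat.find_min' hP hkne) hkg
  have hmin : ∀ j, j < k0 → b j = b' j := by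
    intro j hj
    have := Nat.find_min hP hj
    simpa [not_not] using this
  cases h1 : b k0 <;> cases h2 : b' k0
  · exact absurd (h1.trans h2.symm) hk0
  · have := gap_aux hdbl hg b' b hk0g hmono h2 h1 (fun j hj => (hmin j hj).symm)
    rw [abs_sub_comm]
    exact lt_of_lt_of_le this (le_abs_self _)
  · have := gap_aux hdbl hg b b' hk0g hmono h1 h2 hmin
    exact lt_of_lt_of_le this (le_abs_self _)
  · exact absurd (h1.trans h2.symm) hk0

def box (d : ℕ) (a : Fin d → ℝ) (c : ℝ) : Set (EuclideanSpace ℝ (Fin d)) :=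
  {y | ∀ i, a i ≤ y i ∧ y i ≤ a i + c}

lemma box_eq (d : ℕ) (a : Fin d → ℝ) (c : ℝ) :
    box d a c = (MeasurableEquiv.toLp 2 (Fin d → ℝ)).symm ⁻¹'
      (Set.univ.pi fun i => Icc (a i) (a i + c)) := by
  ext y
  simp [box, Set.mem_pi, MeasurableEquiv.toLp, Set.mem_Icc, Pi.le_def,
    WithLp.equiv, forall_and, Equiv.refl_apply]

lemma measurableSet_box (d : ℕ) (a : Fin d → ℝ) (c : ℝ) :
    MeasurableSet (box d a c) := by
  rw [box_eq]
  exact (MeasurableEquiv.toLp 2 (Fin d → ℝ)).symm.measurable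
    (MeasurableSet.univ_pi fun i => measurableSet_Icc)

lemma volume_box (d : ℕ) (a : Fin d → ℝ) (c : ℝ) (hc : 0 ≤ c) :
    volume (box d a c) = (ENNReal.ofReal c) ^ d := by
  rw [box_eq, (EuclideanSpace.volume_preserving_symm_measurableEquiv_toLp (Fin d)).measure_preimage
    (MeasurableSet.univ_pi fun i => measurableSet_Icc).nullMeasurableSet]
  rw [volume_pi_pi]
  simp [Real.volume_Icc]

lemma coord_dist {d : ℕ} (x y : EuclideanSpace ℝ (Fin d)) (i : Fin d) :
    |y i - x i| ≤ dist y x := by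
  rw [EuclideanSpace.dist_eq]
  have h : |y i - x i| = Real.sqrt (dist (y i) (x i) ^ 2) := by
    rw [Real.dist_eq, sq_abs, Real.sqrt_sq_eq_abs]
  rw [h]
  apply Real.sqrt_le_sqrt
  exact Finset.single_le_sum (f := fun j => dist (y j) (x j) ^ 2)
    (fun j _ => sq_nonneg _) (Finset.mem_univ i)

lemma ball_subset_box {d : ℕ} (x : EuclideanSpace ℝ (Fin d)) (r : ℝ) :
    Metric.ball x r ⊆ box d (fun i => x i - r) (2 * r) := by
  intro y hy i
  have := coord_dist x y i
  have hlt : dist y x < r := Metric.mem_ball.1 hy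
  have := abs_le.1 (le_of_lt (lt_of_le_of_lt this hlt))
  constructor <;> dsimp only <;> linarith [this.1, this.2]


noncomputable def crn (d n : ℕ) (ℓ : ℕ → ℝ) : (Fin n → Fin d → Bool) → Fin d → ℝ :=
  fun ε i => ∑ k : Fin n, if ε k i then ℓ (k : ℕ) - ℓ ((k : ℕ) + 1) else 0

def cb (d n : ℕ) (ℓ : ℕ → ℝ) (ε : Fin n → Fin d → Bool) : Set (EuclideanSpace ℝ (Fin d)) :=
  {y | ∀ i, crn d n ℓ ε i ≤ y i ∧ y i ≤ crn d n ℓ ε i + ℓ n}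

lemma cb_eq_box (d n : ℕ) (ℓ : ℕ → ℝ) (ε : Fin n → Fin d → Bool) :
    cb d n ℓ ε = box d (crn d n ℓ ε) (ℓ n) := rfl

def col {d n : ℕ} (ε : Fin n → Fin d → Bool) (i : Fin d) : ℕ → Bool :=
  fun k => if h : k < n then ε ⟨k, h⟩ i else false

lemma crn_eq_colS (d n : ℕ) (ℓ : ℕ → ℝ) (ε : Fin n → Fin d → Bool) (i : Fin d) :
    crn d n ℓ ε i = colS ℓ n (col ε i) := by
  rw [crn, colS, ← Fin.sum_univ_eq_sum_range]
  refine Finset.sum_congr rfl fun k _ => ?_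
  simp [col, k.isLt]

section Count

variable {d n : ℕ} {ℓ : ℕ → ℝ}

lemma card_meet (hpos : ∀ k, 0 < ℓ k) (hdbl : ∀ k, k < n → 2 * ℓ (k+1) < ℓ k)
    (hmono : ∀ k, k < n → ℓ (k+1) ≤ ℓ k)
    {g : ℕ} (hg : g ≤ n) (x : EuclideanSpace ℝ (Fin d)) {r : ℝ} (hr : 0 < r)
    (hrg : r ≤ ℓ g) :
    (Finset.univ.filter
      (fun ε : Fin n → Fin d → Bool => (cb d n ℓ ε ∩ Metric.ball x r).Nonempty)).card
      ≤ 4 ^ d * 2 ^ ((n - g) * d) := by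
  classical
  set F := Finset.univ.filter
      (fun ε : Fin n → Fin d → Bool => (cb d n ℓ ε ∩ Metric.ball x r).Nonempty) with hF
  have hℓg := hpos g
  -- key membership bounds
  have key : ∀ ε ∈ F, ∀ i, x i - r - ℓ g ≤ colS ℓ g (col ε i) ∧
      colS ℓ g (col ε i) ≤ x i + r := by
    intro ε hε i
    obtain ⟨y, hycb, hyball⟩ := (Finset.mem_filter.1 hε).2
    have hcrn := hycb i
    rw [crn_eq_colS] at hcrn
    obtain ⟨ht1, ht2⟩ := tail_bounds hmono hg (col ε i)
    have hdy := abs_le.1 (le_of_lt (lt_of_le_of_lt (coord_dist x y i) (Metric.mem_ball.1 hyball)))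
    constructor <;> linarith [hdy.1, hdy.2, hcrn.1, hcrn.2]
  -- the injection
  set u : (Fin n → Fin d → Bool) → Fin d → ℝ :=
    fun ε i => (colS ℓ g (col ε i) - (x i - r - ℓ g)) / ℓ g with hu
  have hufloor : ∀ ε ∈ F, ∀ i, (0:ℝ) ≤ u ε i ∧ u ε i ≤ 3 := by
    intro ε hε i
    obtain ⟨h1, h2⟩ := key ε hε i
    constructor
    · apply div_nonneg _ hℓg.le; linarith
    · rw [div_le_iff₀ hℓg]; linarith
  have hufloor3 : ∀ ε ∈ F, ∀ i, ⌊u ε i⌋₊ ≤ 3 := by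
    intro ε hε i
    have := Nat.floor_le_floor (hufloor ε hε i).2
    simpa using this
  set Φ : (Fin n → Fin d → Bool) → (Fin d → Fin 4) × (Fin (n - g) → Fin d → Bool) :=
    fun ε => (fun i => ⟨min 3 ⌊u ε i⌋₊, by omega⟩,
              fun j i => ε ⟨g + (j : ℕ), by omega⟩ i) with hΦ
  have hinj : Set.InjOn Φ F := by
    intro ε hε ε' hε' heq
    have h1 := congrArg Prod.fst heq
    have h2 := congrArg Prod.snd heq
    simp only [hΦ] at h1 h2
    -- columns agree below g
    have hcols : ∀ i, ∀ k, k < g → col ε i k = col ε' i k := by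
      intro i
      by_contra hcon
      push_neg at hcon
      obtain ⟨k, hkg, hkne⟩ := hcon
      have hgap := gap hdbl hmono hg (col ε i) (col ε' i) ⟨k, hkg, hkne⟩
      -- but floors equal
      have hfl : ⌊u ε i⌋₊ = ⌊u ε' i⌋₊ := by
        have := congrFun h1 i
        have h3 := hufloor3 ε hε i
        have h3' := hufloor3 ε' hε' i
        have := congrArg Fin.val this
        simpa [Nat.min_eq_right h3, Nat.min_eq_right h3'] using this
      have hb1 := hufloor ε hε i
      have hb2 := hufloor ε' hε' i
      have hlt1 := Nat.lt_floor_add_one (u ε i)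
      have hle1 := Nat.floor_le hb1.1
      have hlt2 := Nat.lt_floor_add_one (u ε' i)
      have hle2 := Nat.floor_le hb2.1
      rw [hfl] at hlt1 hle1
      have habs : |u ε i - u ε' i| < 1 := by
        rw [abs_lt]; constructor <;> linarith
      have : |colS ℓ g (col ε i) - colS ℓ g (col ε' i)| < ℓ g := by
        have huu : colS ℓ g (col ε i) - colS ℓ g (col ε' i) = (u ε i - u ε' i) * ℓ g := by
          simp only [hu]; field_simp; ring
        rw [huu, abs_mul, abs_of_pos hℓg]
        nlinarith [abs_nonneg (u ε i - u ε' i)]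
      linarith
    funext k i
    by_cases hk : (k : ℕ) < g
    · have := hcols i k hk
      simpa [col, k.isLt] using this
    · have := congrFun (congrFun h2 ⟨(k : ℕ) - g, by omega⟩) i
      have hkk : (⟨g + ((k : ℕ) - g), by omega⟩ : Fin n) = k := by
        apply Fin.ext; simp; omega
      rwa [hkk] at this
  calc F.card ≤ (Finset.univ : Finset ((Fin d → Fin 4) × (Fin (n - g) → Fin d → Bool))).card := by
        apply Finset.card_le_card_of_injOn Φ (fun _ _ => Finset.mem_univ _) hinj
    _ = 4 ^ d * 2 ^ ((n - g) * d) := by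
        simp [Fintype.card_prod, Fintype.card_fun, ← pow_mul, Nat.mul_comm]

end Count

section MeasureBounds

variable {d n : ℕ} {ℓ : ℕ → ℝ}

noncomputable def mm (d n : ℕ) (ℓ : ℕ → ℝ) : Measure (EuclideanSpace ℝ (Fin d)) :=
  ((2 : ENNReal) ^ (n * d))⁻¹ •
    ∑ ε : Fin n → Fin d → Bool, (volume (cb d n ℓ ε))⁻¹ • volume.restrict (cb d n ℓ ε)

lemma mm_apply (S : Set (EuclideanSpace ℝ (Fin d))) :
    mm d n ℓ S = ((2 : ENNReal) ^ (n * d))⁻¹ *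
      ∑ ε : Fin n → Fin d → Bool, (volume (cb d n ℓ ε))⁻¹ * volume (S ∩ cb d n ℓ ε) := by
  rw [mm, Measure.smul_apply, Measure.coe_finset_sum, Finset.sum_apply, smul_eq_mul]
  congr 1
  refine Finset.sum_congr rfl fun ε _ => ?_
  rw [Measure.smul_apply, smul_eq_mul, Measure.restrict_apply' (by
    rw [cb_eq_box]; exact measurableSet_box d _ _)]

lemma vol_cb (hpos : 0 < ℓ n) (ε : Fin n → Fin d → Bool) :
    volume (cb d n ℓ ε) = (ENNReal.ofReal (ℓ n)) ^ d := by
  rw [cb_eq_box, volume_box d _ _ hpos.le]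

lemma vol_cb_ne_zero (hpos : 0 < ℓ n) (ε : Fin n → Fin d → Bool) :
    volume (cb d n ℓ ε) ≠ 0 := by
  rw [vol_cb hpos]
  exact pow_ne_zero _ (by simp [ENNReal.ofReal_pos, hpos] : ENNReal.ofReal (ℓ n) ≠ 0)

lemma vol_cb_ne_top (hpos : 0 < ℓ n) (ε : Fin n → Fin d → Bool) :
    volume (cb d n ℓ ε) ≠ ⊤ := by
  rw [vol_cb hpos]
  exact ENNReal.pow_ne_top ENNReal.ofReal_ne_top

lemma mm_univ_le (hpos : 0 < ℓ n) : mm d n ℓ (univ : Set (EuclideanSpace ℝ (Fin d))) ≤ 1 := by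
  rw [mm_apply]
  have : ∀ ε : Fin n → Fin d → Bool,
      (volume (cb d n ℓ ε))⁻¹ * volume (univ ∩ cb d n ℓ ε) = 1 := by
    intro ε
    rw [Set.univ_inter, ENNReal.inv_mul_cancel (vol_cb_ne_zero hpos ε) (vol_cb_ne_top hpos ε)]
  rw [Finset.sum_congr rfl fun ε _ => this ε, Finset.sum_const, Finset.card_univ]
  have hcard : Fintype.card (Fin n → Fin d → Bool) = 2 ^ (n * d) := by
    simp [Fintype.card_fun, ← pow_mul, Nat.mul_comm]
  rw [hcard]
  simp only [nsmul_eq_mul, mul_one]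
  push_cast
  rw [ENNReal.inv_mul_cancel (pow_ne_zero _ (by norm_num))
    (ENNReal.pow_ne_top (by norm_num))]

lemma mm_ball_le_one (hpos : 0 < ℓ n) (x : EuclideanSpace ℝ (Fin d)) (r : ℝ) :
    mm d n ℓ (Metric.ball x r) ≤ 1 :=
  le_trans (measure_mono (subset_univ _)) (mm_univ_le hpos)

lemma mm_ball_L1 (hpos : ∀ k, 0 < ℓ k) (hdbl : ∀ k, k < n → 2 * ℓ (k+1) < ℓ k)
    (hmono : ∀ k, k < n → ℓ (k+1) ≤ ℓ k)
    {g : ℕ} (hg : g ≤ n) (x : EuclideanSpace ℝ (Fin d)) {r : ℝ} (hr : 0 < r)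
    (hrg : r ≤ ℓ g) :
    mm d n ℓ (Metric.ball x r) ≤
      ((4 ^ d * 2 ^ ((n - g) * d) : ℕ) : ENNReal) * ((2 : ENNReal) ^ (n * d))⁻¹ := by
  rw [mm_apply, mul_comm]
  refine mul_le_mul' ?_ le_rfl
  set F := Finset.univ.filter
      (fun ε : Fin n → Fin d → Bool => (cb d n ℓ ε ∩ Metric.ball x r).Nonempty) with hF
  calc ∑ ε : Fin n → Fin d → Bool, (volume (cb d n ℓ ε))⁻¹ * volume (Metric.ball x r ∩ cb d n ℓ ε)
      ≤ ∑ ε : Fin n → Fin d → Bool, (if ε ∈ F then 1 else 0) := by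
        refine Finset.sum_le_sum fun ε _ => ?_
        by_cases hε : ε ∈ F
        · rw [if_pos hε]
          calc (volume (cb d n ℓ ε))⁻¹ * volume (Metric.ball x r ∩ cb d n ℓ ε)
              ≤ (volume (cb d n ℓ ε))⁻¹ * volume (cb d n ℓ ε) :=
                mul_le_mul_right (measure_mono Set.inter_subset_right) _
            _ = 1 := ENNReal.inv_mul_cancel (vol_cb_ne_zero (hpos n) ε) (vol_cb_ne_top (hpos n) ε)
        · rw [if_neg hε]
          have : cb d n ℓ ε ∩ Metric.ball x r = ∅ := by
            rw [← Set.not_nonempty_iff_eq_empty]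
            intro hne
            exact hε (Finset.mem_filter.2 ⟨Finset.mem_univ _, hne⟩)
          rw [Set.inter_comm, this]
          simp
    _ = (F.card : ENNReal) := by rw [Finset.sum_ite_mem, Finset.univ_inter, Finset.sum_const]; simp
    _ ≤ ((4 ^ d * 2 ^ ((n - g) * d) : ℕ) : ENNReal) := by
        exact_mod_cast Nat.cast_le.2 (card_meet hpos hdbl hmono hg x hr hrg)

lemma mm_ball_L2 (hpos : ∀ k, 0 < ℓ k) (hdbl : ∀ k, k < n → 2 * ℓ (k+1) < ℓ k)
    (hmono : ∀ k, k < n → ℓ (k+1) ≤ ℓ k)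
    (x : EuclideanSpace ℝ (Fin d)) {r : ℝ} (hr : 0 < r) (hrg : r ≤ ℓ n) :
    mm d n ℓ (Metric.ball x r) ≤
      ((4 ^ d : ℕ) : ENNReal) * ((2 : ENNReal) ^ (n * d))⁻¹ *
        (((ENNReal.ofReal (ℓ n)) ^ d)⁻¹ * ENNReal.ofReal (2 * r) ^ d) := by
  rw [mm_apply]
  rw [mul_comm (((4 ^ d : ℕ) : ENNReal)) (((2 : ENNReal) ^ (n * d))⁻¹), mul_assoc]
  refine mul_le_mul' le_rfl ?_
  set F := Finset.univ.filter
      (fun ε : Fin n → Fin d → Bool => (cb d n ℓ ε ∩ Metric.ball x r).Nonempty) with hF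
  have hvol_ball : volume (Metric.ball x r) ≤ ENNReal.ofReal (2 * r) ^ d := by
    refine le_trans (measure_mono (ball_subset_box x r)) ?_
    rw [volume_box d _ _ (by linarith)]
  calc ∑ ε : Fin n → Fin d → Bool, (volume (cb d n ℓ ε))⁻¹ * volume (Metric.ball x r ∩ cb d n ℓ ε)
      ≤ ∑ ε : Fin n → Fin d → Bool,
          (if ε ∈ F then ((ENNReal.ofReal (ℓ n)) ^ d)⁻¹ * ENNReal.ofReal (2 * r) ^ d else 0) := by
        refine Finset.sum_le_sum fun ε _ => ?_
        by_cases hε : ε ∈ F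
        · rw [if_pos hε, vol_cb (hpos n)]
          exact mul_le_mul_right (le_trans (measure_mono Set.inter_subset_left) hvol_ball) _
        · rw [if_neg hε]
          have : cb d n ℓ ε ∩ Metric.ball x r = ∅ := by
            rw [← Set.not_nonempty_iff_eq_empty]
            intro hne
            exact hε (Finset.mem_filter.2 ⟨Finset.mem_univ _, hne⟩)
          rw [Set.inter_comm, this]
          simp
    _ = (F.card : ENNReal) * (((ENNReal.ofReal (ℓ n)) ^ d)⁻¹ * ENNReal.ofReal (2 * r) ^ d) := by
        rw [Finset.sum_ite_mem, Finset.univ_inter, Finset.sum_const]; simp [mul_comm]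
    _ ≤ ((4 ^ d : ℕ) : ENNReal) * (((ENNReal.ofReal (ℓ n)) ^ d)⁻¹ * ENNReal.ofReal (2 * r) ^ d) := by
        refine mul_le_mul' ?_ le_rfl
        have := card_meet hpos hdbl hmono (le_refl n) x hr hrg
        simp only [Nat.sub_self, Nat.zero_mul, pow_zero, Nat.mul_one] at this
        exact_mod_cast Nat.cast_le.2 this


lemma M_le_one (hpos : 0 < ℓ n) (x : EuclideanSpace ℝ (Fin d)) (r : ℝ) :
    (mm d n ℓ (Metric.ball x r)).toReal ≤ 1 := by
  have := ENNReal.toReal_mono (by norm_num) (mm_ball_le_one hpos x r)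
  simpa using this

lemma M_L1_real (hpos : ∀ k, 0 < ℓ k) (hdbl : ∀ k, k < n → 2 * ℓ (k+1) < ℓ k)
    (hmono : ∀ k, k < n → ℓ (k+1) ≤ ℓ k)
    {g : ℕ} (hg : g ≤ n) (x : EuclideanSpace ℝ (Fin d)) {r : ℝ} (hr : 0 < r)
    (hrg : r ≤ ℓ g) :
    (mm d n ℓ (Metric.ball x r)).toReal ≤ 4 ^ d * ((2 : ℝ) ^ (g * d))⁻¹ := by
  have hB : (((4 ^ d * 2 ^ ((n - g) * d) : ℕ) : ENNReal) * ((2 : ENNReal) ^ (n * d))⁻¹) ≠ ⊤ :=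
    ENNReal.mul_ne_top (ENNReal.natCast_ne_top _)
      (ENNReal.inv_ne_top.2 (pow_ne_zero _ (by norm_num)))
  have h := ENNReal.toReal_mono hB (mm_ball_L1 hpos hdbl hmono hg x hr hrg)
  have hBval : (((4 ^ d * 2 ^ ((n - g) * d) : ℕ) : ENNReal) *
      ((2 : ENNReal) ^ (n * d))⁻¹).toReal = (4 ^ d * 2 ^ ((n - g) * d) : ℝ) * ((2 : ℝ) ^ (n * d))⁻¹ := by
    rw [ENNReal.toReal_mul, ENNReal.toReal_inv]
    push_cast
    simp
  rw [hBval] at h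
  refine le_trans h (le_of_eq ?_)
  have hsplit : (2 : ℝ) ^ (n * d) = 2 ^ (g * d) * 2 ^ ((n - g) * d) := by
    rw [← pow_add]
    congr 1
    have : g * d + (n - g) * d = (g + (n - g)) * d := by ring
    rw [this, Nat.add_sub_cancel' hg]
  rw [hsplit]
  have h1 : (2:ℝ) ^ (g*d) ≠ 0 := by positivity
  have h2 : (2:ℝ) ^ ((n-g)*d) ≠ 0 := by positivity
  field_simp

lemma M_L2_real (hpos : ∀ k, 0 < ℓ k) (hdbl : ∀ k, k < n → 2 * ℓ (k+1) < ℓ k)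
    (hmono : ∀ k, k < n → ℓ (k+1) ≤ ℓ k)
    (x : EuclideanSpace ℝ (Fin d)) {r : ℝ} (hr : 0 < r) (hrg : r ≤ ℓ n) :
    (mm d n ℓ (Metric.ball x r)).toReal ≤
      4 ^ d * ((2 : ℝ) ^ (n * d))⁻¹ * (((ℓ n) ^ d)⁻¹ * (2 * r) ^ d) := by
  have hofr : ENNReal.ofReal (ℓ n) ≠ 0 := by simp [ENNReal.ofReal_pos, hpos n, (hpos n).le]
  have hB : (((4 ^ d : ℕ) : ENNReal) * ((2 : ENNReal) ^ (n * d))⁻¹ *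
      (((ENNReal.ofReal (ℓ n)) ^ d)⁻¹ * ENNReal.ofReal (2 * r) ^ d)) ≠ ⊤ := by
    refine ENNReal.mul_ne_top (ENNReal.mul_ne_top (ENNReal.natCast_ne_top _)
      (ENNReal.inv_ne_top.2 (pow_ne_zero _ (by norm_num))))
      (ENNReal.mul_ne_top (ENNReal.inv_ne_top.2 (pow_ne_zero _ hofr))
      (ENNReal.pow_ne_top ENNReal.ofReal_ne_top))
  have h := ENNReal.toReal_mono hB (mm_ball_L2 hpos hdbl hmono x hr hrg)
  refine le_trans h (le_of_eq ?_)
  rw [ENNReal.toReal_mul, ENNReal.toReal_mul, ENNReal.toReal_mul, ENNReal.toReal_inv,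
    ENNReal.toReal_inv, ENNReal.toReal_pow, ENNReal.toReal_pow, ENNReal.toReal_pow,
    ENNReal.toReal_ofReal (hpos n).le, ENNReal.toReal_ofReal (by linarith : (0:ℝ) ≤ 2 * r)]
  push_cast
  simp

end MeasureBounds

lemma key_alg {r : ℝ} (hr : 0 < r) (a s : ℝ) :
    (r ^ a / r ^ s) ^ 2 / r = r ^ (2*a - 2*s - 1) := by
  have h1 : r ^ a / r ^ s = r ^ (a - s) := (Real.rpow_sub hr a s).symm
  have h2 : (r ^ (a-s))^2 = r ^ ((a-s) + (a-s)) := by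
    rw [Real.rpow_add hr]; ring
  have h3 : r ^ (((a-s)+(a-s)) - 1) = r ^ ((a-s)+(a-s)) / r ^ (1:ℝ) := Real.rpow_sub hr _ _
  rw [h1, h2, show (2*a-2*s-1) = ((a-s)+(a-s)) - 1 by ring, h3, Real.rpow_one]

section Analysis

variable {d n : ℕ} {ℓ : ℕ → ℝ} {s : ℝ}

lemma pow8sq (d : ℕ) : ((8:ℝ)^d)^2 = 64^d := by
  rw [← pow_mul, show (64:ℝ) = 8^2 by norm_num, ← pow_mul, Nat.mul_comm]

lemma E1 {L : ℝ} (hL : 0 < L) (a : ℝ) (m : ℕ) :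
    L ^ ((m:ℝ)*2 + a*(-2)) = ((L^m)^2) * (((L^a)^2)⁻¹) := by
  rw [Real.rpow_add hL]
  congr 1
  · rw [Real.rpow_mul hL.le, Real.rpow_natCast,
      show ((2:ℝ)) = ((2:ℕ):ℝ) by norm_num, Real.rpow_natCast]
  · rw [show a*(-2) = -(a*2) by ring, Real.rpow_neg hL.le, Real.rpow_mul hL.le,
      show ((2:ℝ)) = ((2:ℕ):ℝ) by norm_num, Real.rpow_natCast]

lemma mono_helper {r M B s : ℝ} (hr : 0 < r) (hM : 0 ≤ M) (h : M ≤ B) :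
    (M / r^s)^2 / r ≤ (B / r^s)^2 / r := by
  have hrs : (0:ℝ) < r ^ s := Real.rpow_pos_of_pos hr s
  gcongr

lemma integral_bound (hd : 0 < d) (hs : 0 < s) (hsd : s < (d:ℝ))
    (hpos : ∀ k, 0 < ℓ k) (hdbl : ∀ k, k < n → 2 * ℓ (k+1) < ℓ k)
    (hmono : ∀ k, k < n → ℓ (k+1) ≤ ℓ k) (x : EuclideanSpace ℝ (Fin d)) :
    ∫ r in Ioi (0:ℝ), ((mm d n ℓ (Metric.ball x r)).toReal / r ^ s) ^ 2 / r ≤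
      (64^d * (1/(2*((d:ℝ) - s)) + 1/(2*s))) *
        ∑ k ∈ Finset.range (n+1), (((2:ℝ)^(k*d))⁻¹ / ℓ k ^ s) ^ 2 := by
  classical
  set f : ℝ → ℝ := fun r => ((mm d n ℓ (Metric.ball x r)).toReal / r ^ s) ^ 2 / r with hf
  set c0 : ℝ := 64^d * (((2:ℝ)^(n*d))⁻¹ * ((ℓ n)^d)⁻¹)^2 with hc0
  set p0 : ℝ := 2*(d:ℝ) - 2*s - 1 with hp0
  set q : ℝ := 2*0 - 2*s - 1 with hq
  set G0 : ℝ → ℝ := Set.indicator (Ioc 0 (ℓ n)) (fun r => c0 * r ^ p0) with hG0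
  set Gk : ℕ → ℝ → ℝ := fun k => Set.indicator (Ioi (ℓ k))
    (fun r => 64^d * (((2:ℝ)^(k*d))⁻¹)^2 * r ^ q) with hGk
  set G : ℝ → ℝ := fun r => G0 r + ∑ k ∈ Finset.range (n+1), Gk k r with hG
  have hp0' : (-1:ℝ) < p0 := by rw [hp0]; push_cast; linarith
  have hq' : q < -1 := by rw [hq]; linarith
  have hc0nn : 0 ≤ c0 := by positivity
  have hG0nn : ∀ r, 0 ≤ G0 r := by
    intro r
    refine Set.indicator_nonneg (fun y hy => ?_) r
    have : (0:ℝ) < y := hy.1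
    positivity
  have hGknn : ∀ k r, 0 ≤ Gk k r := by
    intro k r
    refine Set.indicator_nonneg (fun y hy => ?_) r
    have h0y : (0:ℝ) < y := lt_trans (hpos k) hy
    positivity
  -- pointwise bound
  have hpt : ∀ r ∈ Ioi (0:ℝ), f r ≤ G r := by
    intro r hr
    rw [Set.mem_Ioi] at hr
    have hrs : (0:ℝ) < r ^ s := Real.rpow_pos_of_pos hr s
    have hMnn : 0 ≤ (mm d n ℓ (Metric.ball x r)).toReal := ENNReal.toReal_nonneg
    have hsumnn : 0 ≤ ∑ k ∈ Finset.range (n+1), Gk k r :=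
      Finset.sum_nonneg fun k _ => hGknn k r
    by_cases hcase : r ≤ ℓ n
    · -- small scale
      have hM := M_L2_real hpos hdbl hmono x hr hcase
      have hBnn : (0:ℝ) ≤ 8^d * (((2:ℝ)^(n*d))⁻¹ * ((ℓ n)^d)⁻¹) * r ^ (d:ℝ) := by
        have := (hpos n); positivity
      have hB : 4 ^ d * ((2 : ℝ) ^ (n * d))⁻¹ * (((ℓ n) ^ d)⁻¹ * (2 * r) ^ d)
          = (8^d * (((2:ℝ)^(n*d))⁻¹ * ((ℓ n)^d)⁻¹)) * r ^ (d:ℝ) := by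
        rw [Real.rpow_natCast, mul_pow,
          show (8:ℝ)^d = 4^d * 2^d by rw [← mul_pow]; norm_num]
        ring
      have hfle : f r ≤ ((8^d * (((2:ℝ)^(n*d))⁻¹ * ((ℓ n)^d)⁻¹)) * r ^ (d:ℝ) / r ^ s) ^ 2 / r := by
        rw [hf]
        refine mono_helper hr hMnn ?_
        rw [← hB]
        exact hM
      have halg : ((8^d * (((2:ℝ)^(n*d))⁻¹ * ((ℓ n)^d)⁻¹)) * r ^ (d:ℝ) / r ^ s) ^ 2 / r
          = c0 * r ^ p0 := by
        rw [mul_div_assoc, mul_pow, mul_div_assoc, key_alg hr (d:ℝ) s, hc0, hp0,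
          mul_pow, pow8sq]
      have hin : r ∈ Ioc (0:ℝ) (ℓ n) := ⟨hr, hcase⟩
      have hG0r : G0 r = c0 * r ^ p0 := Set.indicator_of_mem hin _
      rw [hG]
      calc f r ≤ c0 * r ^ p0 := by rw [← halg]; exact hfle
        _ ≤ G0 r + ∑ k ∈ Finset.range (n+1), Gk k r := by rw [hG0r]; linarith
    · -- larger scales
      push_neg at hcase
      have hex : ∃ k, ℓ k < r := ⟨n, hcase⟩
      set k0 := Nat.find hex with hk0def
      have hk0 : ℓ k0 < r := Nat.find_spec hex
      have hk0n : k0 ≤ n := Nat.find_min' hex hcase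
      have hM : (mm d n ℓ (Metric.ball x r)).toReal ≤ 8^d * (((2:ℝ)^(k0*d))⁻¹) := by
        rcases Nat.eq_zero_or_pos k0 with h0 | h0
        · have h1 := M_le_one (hpos n) x r
          have he : (8:ℝ)^d * (((2:ℝ)^(k0*d))⁻¹) = 8^d := by
            rw [h0]; norm_num
          rw [he]
          refine le_trans h1 ?_
          have h8 : (1:ℝ)^d ≤ 8^d := pow_le_pow_left₀ (by norm_num) (by norm_num) d
          simpa using h8
        · obtain ⟨j, hj⟩ : ∃ j, k0 = j + 1 := ⟨k0 - 1, by omega⟩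
          have hrj : r ≤ ℓ j := by
            have h2 := Nat.find_min hex (m := j) (by omega)
            push_neg at h2
            exact h2
          have hjn : j ≤ n := by omega
          have h1 := M_L1_real hpos hdbl hmono hjn x hr hrj
          refine le_trans h1 (le_of_eq ?_)
          rw [hj]
          have h2 : ((2:ℝ)^((j+1)*d)) = 2^(j*d) * 2^d := by
            rw [← pow_add]; congr 1; ring
          rw [h2, show (8:ℝ)^d = 4^d * 2^d by rw [← mul_pow]; norm_num, mul_inv]
          have h3 : ((2:ℝ)^(j*d)) ≠ 0 := by positivity
          have h4 : ((2:ℝ)^d) ≠ 0 := by positivity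
          field_simp
      have halg : ((8^d * (((2:ℝ)^(k0*d))⁻¹)) / r ^ s) ^ 2 / r
          = 64^d * (((2:ℝ)^(k0*d))⁻¹)^2 * r ^ q := by
        have h5 : (8^d * (((2:ℝ)^(k0*d))⁻¹)) / r ^ s
            = 8^d * (((2:ℝ)^(k0*d))⁻¹) * (r ^ (0:ℝ) / r ^ s) := by
          rw [Real.rpow_zero]; ring
        rw [h5, mul_pow, mul_div_assoc, key_alg hr 0 s, hq, mul_pow, pow8sq]
      have hfle : f r ≤ 64^d * (((2:ℝ)^(k0*d))⁻¹)^2 * r ^ q := by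
        rw [← halg, hf]
        exact mono_helper hr hMnn hM
      have hGk0 : Gk k0 r = 64^d * (((2:ℝ)^(k0*d))⁻¹)^2 * r ^ q :=
        Set.indicator_of_mem hk0 _
      have hsingle : Gk k0 r ≤ ∑ k ∈ Finset.range (n+1), Gk k r :=
        Finset.single_le_sum (fun k _ => hGknn k r) (Finset.mem_range.2 (by omega))
      rw [hG]
      calc f r ≤ Gk k0 r := by rw [hGk0]; exact hfle
        _ ≤ G0 r + ∑ k ∈ Finset.range (n+1), Gk k r := by linarith [hG0nn r]
  -- integrability
  have hinter0 : Ioc (0:ℝ) (ℓ n) ∩ Ioi 0 = Ioc 0 (ℓ n) :=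
    inter_eq_left.2 (fun y hy => hy.1)
  have hinterk : ∀ k : ℕ, Ioi (ℓ k) ∩ Ioi (0:ℝ) = Ioi (ℓ k) := fun k =>
    inter_eq_left.2 (fun y hy => lt_trans (hpos k) hy)
  have hI0 : Integrable G0 (volume.restrict (Ioi (0:ℝ))) := by
    rw [hG0, integrable_indicator_iff measurableSet_Ioc]
    rw [IntegrableOn, Measure.restrict_restrict measurableSet_Ioc, hinter0]
    exact (intervalIntegral.intervalIntegrable_rpow' hp0').1.const_mul c0
  have hIk : ∀ k ∈ Finset.range (n+1), Integrable (Gk k) (volume.restrict (Ioi (0:ℝ))) := by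
    intro k _
    rw [hGk, integrable_indicator_iff measurableSet_Ioi]
    rw [IntegrableOn, Measure.restrict_restrict measurableSet_Ioi, hinterk k]
    exact (integrableOn_Ioi_rpow_of_lt hq' (hpos k)).const_mul _
  have hGint : Integrable G (volume.restrict (Ioi (0:ℝ))) :=
    hI0.add (integrable_finset_sum _ hIk)
  have hmono_int : ∫ r in Ioi (0:ℝ), f r ≤ ∫ r in Ioi (0:ℝ), G r := by
    refine integral_mono_of_nonneg ?_ hGint ?_
    · refine (ae_restrict_iff' measurableSet_Ioi).2 (ae_of_all _ ?_)
      intro r hr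
      rw [Set.mem_Ioi] at hr
      rw [hf]
      positivity
    · exact (ae_restrict_iff' measurableSet_Ioi).2 (ae_of_all _ hpt)
  -- compute the integral of G
  have hintG0 : ∫ r in Ioi (0:ℝ), G0 r = c0 * ((ℓ n) ^ (p0+1) / (p0+1)) := by
    rw [hG0, integral_indicator measurableSet_Ioc,
      Measure.restrict_restrict measurableSet_Ioc, hinter0,
      ← intervalIntegral.integral_of_le (hpos n).le,
      intervalIntegral.integral_const_mul, integral_rpow (Or.inl hp0'),
      Real.zero_rpow (by linarith : p0 + 1 ≠ 0)]
    ring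
  have hintGk : ∀ k ∈ Finset.range (n+1), ∫ r in Ioi (0:ℝ), Gk k r
      = 64^d * (((2:ℝ)^(k*d))⁻¹)^2 * (-(ℓ k) ^ (q+1) / (q+1)) := by
    intro k _
    rw [hGk, integral_indicator measurableSet_Ioi,
      Measure.restrict_restrict measurableSet_Ioi, hinterk k,
      MeasureTheory.integral_const_mul, integral_Ioi_rpow_of_lt hq' (hpos k)]
  have hintG : ∫ r in Ioi (0:ℝ), G r = c0 * ((ℓ n) ^ (p0+1) / (p0+1)) +
      ∑ k ∈ Finset.range (n+1), 64^d * (((2:ℝ)^(k*d))⁻¹)^2 * (-(ℓ k) ^ (q+1) / (q+1)) := by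
    rw [hG, integral_add hI0 (integrable_finset_sum _ hIk), hintG0,
      integral_finset_sum _ hIk, Finset.sum_congr rfl hintGk]
  -- final arithmetic
  set θ2 : ℕ → ℝ := fun k => (((2:ℝ)^(k*d))⁻¹ / ℓ k ^ s) ^ 2 with hθ2
  have hθ2nn : ∀ k, 0 ≤ θ2 k := fun k => sq_nonneg _
  have hterm0 : c0 * ((ℓ n) ^ (p0+1) / (p0+1)) = 64^d * θ2 n / (2*((d:ℝ)-s)) := by
    have hLs : (0:ℝ) < ℓ n ^ s := Real.rpow_pos_of_pos (hpos n) s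
    have hLd : (0:ℝ) < (ℓ n)^d := pow_pos (hpos n) d
    have he : (ℓ n) ^ (p0+1) = ((ℓ n)^d)^2 * (((ℓ n ^ s)^2)⁻¹) := by
      rw [show p0 + 1 = (d:ℝ)*2 + s*(-2) by rw [hp0]; ring]
      exact E1 (hpos n) s d
    rw [he, hc0, show p0 + 1 = 2*((d:ℝ)-s) by rw [hp0]; ring]
    simp only [hθ2, div_pow]
    have hds : ((d:ℝ) - s) ≠ 0 := by linarith
    field_simp [hds]
  have htermk : ∀ k ∈ Finset.range (n+1),
      64^d * (((2:ℝ)^(k*d))⁻¹)^2 * (-(ℓ k) ^ (q+1) / (q+1)) = 64^d * θ2 k / (2*s) := by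
    intro k _
    have hLs : (0:ℝ) < ℓ k ^ s := Real.rpow_pos_of_pos (hpos k) s
    have he : (ℓ k) ^ (q+1) = ((ℓ k)^(0:ℕ))^2 * (((ℓ k ^ s)^2)⁻¹) := by
      rw [show q + 1 = ((0:ℕ):ℝ)*2 + s*(-2) by rw [hq]; push_cast; ring]
      exact E1 (hpos k) s 0
    rw [he, show q + 1 = -(2*s) by rw [hq]; ring]
    simp only [hθ2, div_pow]
    field_simp [hs.ne']
  have hsum_ge : θ2 n ≤ ∑ k ∈ Finset.range (n+1), θ2 k :=
    Finset.single_le_sum (fun k _ => hθ2nn k) (Finset.mem_range.2 (by omega))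
  have hsumnn : 0 ≤ ∑ k ∈ Finset.range (n+1), θ2 k :=
    Finset.sum_nonneg fun k _ => hθ2nn k
  refine le_trans hmono_int ?_
  rw [hintG, hterm0, Finset.sum_congr rfl htermk, ← Finset.sum_div, ← Finset.mul_sum]
  have hds : (0:ℝ) < (d:ℝ) - s := by linarith
  have h64 : (0:ℝ) < 64^d := by positivity
  have hexp : 64^d*(1/(2*((d:ℝ)-s)) + 1/(2*s)) * (∑ k ∈ Finset.range (n+1), θ2 k)
      = 64^d * (∑ k ∈ Finset.range (n+1), θ2 k)/(2*((d:ℝ)-s))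
        + 64^d * (∑ k ∈ Finset.range (n+1), θ2 k)/(2*s) := by
    field_simp
  rw [hexp]
  have h1 : 64^d*θ2 n/(2*((d:ℝ)-s))
      ≤ 64^d * (∑ k ∈ Finset.range (n+1), θ2 k)/(2*((d:ℝ)-s)) := by
    gcongr
  linarith

end Analysis

end Stmt13Aux

/-- For the natural measure `m` on the `n`-th generation corner Cantor set built from
edge lengths `ℓ₀ > ℓ₁ > …` with `ℓ_{k+1} < λ ℓ_k`, `λ < 1/2`, one has for every `x`:
`∫₀^∞ [m(B(x,r))/r^s]² dr/r ≤ C(d,s) Σ_{k=0}^n θ_k²` with `θ_k = 2^{-kd}/ℓ_k^s`. -/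
theorem stmt13 (d : ℕ) (hd : 0 < d) (s : ℝ) (hs : 0 < s) (hsd : s < d) :
    ∃ C : ℝ, 0 < C ∧
      ∀ (n : ℕ) (ℓ : ℕ → ℝ) (lam : ℝ), 0 < lam → lam < 1 / 2 →
        (∀ k, 0 < ℓ k) → (∀ k, k < n → ℓ (k + 1) < lam * ℓ k) →
        -- lower-left corners of the generation-`n` cubes, indexed by the choices of
        -- corners at each of the `n` subdivision steps
        let corner : (Fin n → Fin d → Bool) → Fin d → ℝ := fun ε i =>
          ∑ k : Fin n, if ε k i then ℓ (k : ℕ) - ℓ ((k : ℕ) + 1) else 0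
        let cube : (Fin n → Fin d → Bool) → Set (EuclideanSpace ℝ (Fin d)) := fun ε =>
          {y | ∀ i, corner ε i ≤ y i ∧ y i ≤ corner ε i + ℓ n}
        -- the natural measure: mass `2^{-nd}` uniformly distributed on each cube
        let m : Measure (EuclideanSpace ℝ (Fin d)) :=
          ((2 : ENNReal) ^ (n * d))⁻¹ •
            ∑ ε : Fin n → Fin d → Bool, (volume (cube ε))⁻¹ • volume.restrict (cube ε)
        ∀ x : EuclideanSpace ℝ (Fin d),
          ∫ r in Set.Ioi (0 : ℝ), ((m (Metric.ball x r)).toReal / r ^ s) ^ 2 / r ≤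
            C * ∑ k ∈ Finset.range (n + 1), (((2 : ℝ) ^ (k * d))⁻¹ / ℓ k ^ s) ^ 2 := by
  refine ⟨64^d * (1/(2*((d:ℝ) - s)) + 1/(2*s)), ?_, ?_⟩
  · have hds : (0:ℝ) < (d:ℝ) - s := by linarith
    positivity
  · intro n ℓ lam hlam hlam2 hpos hstep
    have hdbl : ∀ k, k < n → 2 * ℓ (k+1) < ℓ k := by
      intro k hk
      have h1 := hstep k hk
      have h2 := hpos k
      nlinarith
    have hmono : ∀ k, k < n → ℓ (k+1) ≤ ℓ k := by
      intro k hk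
      have h1 := hdbl k hk
      have h2 := hpos (k+1)
      linarith
    intro corner cube m x
    exact Stmt13Aux.integral_bound hd hs hsd hpos hdbl hmono x
end

section
/- Let h be a measuring function on [0,∞) (continuous, strictly increasing, h(0)=0, h(∞)=∞, h(r)/r^d non-increasing), let 0 < s < d, and suppose t₁ < t₂ with h(t₁)/h(t₂) ≤ 0.05. Then max_{t₁ ≤ t ≤ t₂} h(t)/t^s ≤ C(d,s) · [ ∫_{t₁}^{t₂} (h(t)/t^s)² dt/t ]^{1/2}. -/
open MeasureTheory Set

/-- A measuring (gauge) function: continuous, strictly increasing, vanishing at 0,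
tending to infinity, with `h(r)/r^d` non-increasing on `(0,∞)`. -/
structure Measuring (d : ℕ) (h : ℝ → ℝ) : Prop where
  cont : ContinuousOn h (Set.Ici 0)
  mono : StrictMonoOn h (Set.Ici 0)
  zero : h 0 = 0
  tendsto : Filter.Tendsto h Filter.atTop Filter.atTop
  ratio : ∀ r₁ r₂ : ℝ, 0 < r₁ → r₁ ≤ r₂ → h r₂ / r₂ ^ (d : ℝ) ≤ h r₁ / r₁ ^ (d : ℝ)


set_option maxHeartbeats 1000000 in
/-- If `h(t₁)/h(t₂) ≤ 0.05`, then `max_{t₁ ≤ t ≤ t₂} h(t)/t^s` is controlled by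
`C(d,s)·[∫_{t₁}^{t₂} (h(t)/t^s)² dt/t]^{1/2}`. -/
theorem stmt14 (d : ℕ) (s : ℝ) (hs : 0 < s) (hsd : s < d) :
    ∃ C : ℝ, 0 < C ∧ ∀ h : ℝ → ℝ, Measuring d h →
      ∀ t₁ t₂ : ℝ, 0 < t₁ → t₁ < t₂ → h t₁ / h t₂ ≤ 0.05 →
        ∀ t ∈ Set.Icc t₁ t₂,
          h t / t ^ s ≤ C * Real.sqrt (∫ u in Set.Ioc t₁ t₂, (h u / u ^ s) ^ 2 / u) := by
  have hd : (0:ℝ) < (d:ℝ) := lt_trans hs hsd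
  set D : ℝ := (d:ℝ) with hDdef
  have hDne : D ≠ 0 := ne_of_gt hd
  set L : ℝ := (20:ℝ) ^ (1/(2*D)) with hLdef
  have hL1 : 1 < L := by
    rw [hLdef]
    exact (Real.one_lt_rpow_iff_of_pos (by norm_num)).mpr (Or.inl ⟨by norm_num, by positivity⟩)
  have hL0 : 0 < L := lt_trans one_pos hL1
  have hlogL : 0 < Real.log L := Real.log_pos hL1
  refine ⟨L ^ D / Real.sqrt (Real.log L), by positivity, ?_⟩
  intro h hm t₁ t₂ ht₁ ht12 hratio t ht
  have ht0 : 0 < t := lt_of_lt_of_le ht₁ ht.1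
  have ht2 : 0 < t₂ := lt_trans ht₁ ht12
  have hpos : ∀ r : ℝ, 0 < r → 0 < h r := by
    intro r hr
    have := hm.mono (le_refl (0:ℝ)) (le_of_lt hr) hr
    rwa [hm.zero] at this
  have hmono : MonotoneOn h (Set.Ici 0) := hm.mono.monotoneOn
  have hht2 : 0 < h t₂ := hpos t₂ ht2
  have hht : 0 < h t := hpos t ht0
  -- Step: L * L ≤ t₂ / t₁
  have hLL : L * L ≤ t₂ / t₁ := by
    have hr := hm.ratio t₁ t₂ ht₁ (le_of_lt ht12)
    have h1 : h t₁ ≤ 0.05 * h t₂ := by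
      rw [div_le_iff₀ hht2] at hratio; linarith
    have h2 : h t₂ * t₁ ^ D ≤ h t₁ * t₂ ^ D := by
      rw [div_le_div_iff₀ (by positivity) (by positivity)] at hr
      linarith
    have h3 : 20 * t₁ ^ D ≤ t₂ ^ D := by
      have := le_trans h2 (by nlinarith [Real.rpow_pos_of_pos ht2 D] :
        h t₁ * t₂ ^ D ≤ 0.05 * h t₂ * t₂ ^ D)
      nlinarith [Real.rpow_pos_of_pos ht₁ D]
    have h20 : (20:ℝ) ≤ (t₂/t₁) ^ D := by
      rw [Real.div_rpow (le_of_lt ht2) (le_of_lt ht₁), le_div_iff₀ (by positivity)]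
      linarith
    have h4 : (20:ℝ) ^ (1/D) ≤ ((t₂/t₁) ^ D) ^ (1/D) :=
      Real.rpow_le_rpow (by norm_num) h20 (by positivity)
    have h5 : ((t₂/t₁) ^ D) ^ (1/D) = t₂/t₁ := by
      rw [← Real.rpow_mul (by positivity), mul_one_div, div_self hDne, Real.rpow_one]
    have h6 : L * L = (20:ℝ) ^ (1/D) := by
      rw [hLdef, ← Real.rpow_add (by norm_num : (0:ℝ) < 20)]
      congr 1
      field_simp
      ring
    rw [h6]
    rw [h5] at h4
    exact h4
  -- choose the interval [a, b]
  obtain ⟨a, b, ha0, hta, hb, hbt2, hat, htb⟩ :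
      ∃ a b : ℝ, 0 < a ∧ t₁ ≤ a ∧ b = L * a ∧ b ≤ t₂ ∧ a ≤ t ∧ t ≤ b := by
    by_cases hc : L * t ≤ t₂
    · exact ⟨t, L * t, ht0, ht.1, rfl, hc, le_refl t,
        by nlinarith [mul_pos (sub_pos.mpr hL1) ht0]⟩
    · refine ⟨t / L, t, by positivity, ?_, by field_simp, ht.2, ?_, le_refl t⟩
      · push_neg at hc
        rw [le_div_iff₀ ht₁] at hLL
        rw [le_div_iff₀ hL0]
        nlinarith
      · rw [div_le_iff₀ hL0]
        nlinarith [mul_pos (sub_pos.mpr hL1) ht0]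
  have hab : a < b := by
    rw [hb]; nlinarith [mul_pos (sub_pos.mpr hL1) ha0]
  set M : ℝ := h t / t ^ s with hMdef
  have hM0 : 0 < M := by rw [hMdef]; positivity
  set c : ℝ := L ^ (-D) * M with hcdef
  have hc0 : 0 < c := by rw [hcdef]; positivity
  -- pointwise lower bound on [a, b]
  have key : ∀ u ∈ Set.Icc a b, c ≤ h u / u ^ s := by
    intro u hu
    have hu0 : 0 < u := lt_of_lt_of_le ha0 hu.1
    have hhu : 0 < h u := hpos u hu0
    rcases le_total t u with htu | hut
    · -- t ≤ u : use monotonicity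
      have h1 : h t ≤ h u := hmono (le_of_lt ht0) (le_of_lt hu0) htu
      have h2 : u ^ s ≤ L ^ s * t ^ s := by
        have hub : u ≤ L * t := le_trans hu.2 (by rw [hb]; nlinarith)
        calc u ^ s ≤ (L * t) ^ s := Real.rpow_le_rpow (le_of_lt hu0) hub (le_of_lt hs)
          _ = L ^ s * t ^ s := Real.mul_rpow (le_of_lt hL0) (le_of_lt ht0)
      have h3 : h t / (L ^ s * t ^ s) ≤ h u / u ^ s :=
        div_le_div₀ (le_of_lt hhu) h1 (by positivity) h2
      refine le_trans ?_ h3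
      rw [hcdef, hMdef]
      have h4 : L ^ (-D) ≤ L ^ (-s) :=
        Real.rpow_le_rpow_of_exponent_le (le_of_lt hL1) (by linarith)
      calc L ^ (-D) * (h t / t ^ s) ≤ L ^ (-s) * (h t / t ^ s) := by
            apply mul_le_mul_of_nonneg_right h4; positivity
        _ = h t / (L ^ s * t ^ s) := by
            rw [Real.rpow_neg (le_of_lt hL0)]
            field_simp
    · -- u ≤ t : use the ratio property
      have hr := hm.ratio u t hu0 hut
      have h1 : h t * u ^ D ≤ h u * t ^ D := by
        rw [div_le_div_iff₀ (by positivity) (by positivity)] at hr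
        linarith
      have htL : t / L ≤ u := by
        refine le_trans ?_ hu.1
        rw [div_le_iff₀ hL0]
        have hta' : t ≤ L * a := by rw [← hb]; exact htb
        nlinarith
      have h2 : 1/L ≤ u / t := by
        rw [div_le_div_iff₀ hL0 ht0]
        have : t ≤ u * L := (div_le_iff₀ hL0).mp htL
        linarith
      have h3 : L ^ (-D) ≤ (u / t) ^ D := by
        rw [Real.rpow_neg (le_of_lt hL0), ← Real.inv_rpow (le_of_lt hL0), ← one_div]
        exact Real.rpow_le_rpow (by positivity) h2 (le_of_lt hd)
      have h4 : L ^ (-D) * h t ≤ h u := by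
        have h5 : (u / t) ^ D * h t ≤ h u := by
          rw [Real.div_rpow (le_of_lt hu0) (le_of_lt ht0)]
          rw [div_mul_eq_mul_div, div_le_iff₀ (by positivity)]
          nlinarith
        exact le_trans (mul_le_mul_of_nonneg_right h3 (le_of_lt hht)) h5
      have h6 : u ^ s ≤ t ^ s := Real.rpow_le_rpow (le_of_lt hu0) hut (le_of_lt hs)
      rw [hcdef, hMdef]
      calc L ^ (-D) * (h t / t ^ s) = (L ^ (-D) * h t) / t ^ s := by ring
        _ ≤ h u / t ^ s := div_le_div₀ (le_of_lt hhu) h4 (by positivity) (le_refl _)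
        _ ≤ h u / u ^ s := div_le_div_of_nonneg_left (le_of_lt hhu) (by positivity) h6
  -- the integrand
  set f : ℝ → ℝ := fun u => (h u / u ^ s) ^ 2 / u with hfdef
  have hcontf : ContinuousOn f (Set.Icc t₁ t₂) := by
    apply ContinuousOn.div
    · apply ContinuousOn.pow
      apply ContinuousOn.div
      · exact hm.cont.mono (fun x hx => le_trans (le_of_lt ht₁) hx.1)
      · exact ContinuousOn.rpow_const continuousOn_id
          (fun x hx => Or.inl (ne_of_gt (lt_of_lt_of_le ht₁ hx.1)))
      · intro x hx
        exact ne_of_gt (Real.rpow_pos_of_pos (lt_of_lt_of_le ht₁ hx.1) s)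
    · exact continuousOn_id
    · intro x hx; exact ne_of_gt (lt_of_lt_of_le ht₁ hx.1)
  have hint : IntegrableOn f (Set.Ioc t₁ t₂) :=
    (hcontf.integrableOn_Icc).mono_set Set.Ioc_subset_Icc_self
  have hintab : IntegrableOn f (Set.Ioc a b) :=
    hint.mono_set (Set.Ioc_subset_Ioc hta hbt2)
  have hf_nonneg : ∀ u ∈ Set.Ioc t₁ t₂, 0 ≤ f u := by
    intro u hu
    have hu0 : 0 < u := lt_trans ht₁ hu.1
    simp only [hfdef]
    positivity
  have hg_int : IntegrableOn (fun u => c ^ 2 / u) (Set.Ioc a b) := by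
    apply (ContinuousOn.integrableOn_Icc ?_).mono_set Set.Ioc_subset_Icc_self
    apply ContinuousOn.div continuousOn_const continuousOn_id
    intro x hx; exact ne_of_gt (lt_of_lt_of_le ha0 hx.1)
  have I2 : ∫ u in Set.Ioc a b, c ^ 2 / u ≤ ∫ u in Set.Ioc a b, f u := by
    apply setIntegral_mono_on hg_int hintab measurableSet_Ioc
    intro u hu
    have hu0 : 0 < u := lt_of_lt_of_le ha0 (le_of_lt hu.1)
    have hk := key u ⟨le_of_lt hu.1, hu.2⟩
    simp only [hfdef]
    have hsq : c ^ 2 ≤ (h u / u ^ s) ^ 2 := by nlinarith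
    gcongr
  have I1 : ∫ u in Set.Ioc a b, f u ≤ ∫ u in Set.Ioc t₁ t₂, f u := by
    apply setIntegral_mono_set hint
    · exact (MeasureTheory.ae_restrict_iff' measurableSet_Ioc).mpr
        (Filter.Eventually.of_forall hf_nonneg)
    · exact (Set.Ioc_subset_Ioc hta hbt2).eventuallyLE
  have I3 : ∫ u in Set.Ioc a b, c ^ 2 / u = c ^ 2 * Real.log L := by
    rw [← intervalIntegral.integral_of_le (le_of_lt hab)]
    have hrw : ∀ u : ℝ, c ^ 2 / u = c ^ 2 * u⁻¹ := fun u => by ring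
    simp_rw [hrw]
    rw [intervalIntegral.integral_const_mul, integral_inv]
    · congr 1
      rw [hb, mul_div_assoc, div_self (ne_of_gt ha0), mul_one]
    · intro hmem
      rw [Set.uIcc_of_le (le_of_lt hab)] at hmem
      exact absurd hmem.1 (not_le.mpr ha0)
  have hI : c ^ 2 * Real.log L ≤ ∫ u in Set.Ioc t₁ t₂, f u := by
    rw [← I3]; exact le_trans I2 I1
  have hsqrt : c * Real.sqrt (Real.log L) ≤ Real.sqrt (∫ u in Set.Ioc t₁ t₂, f u) := by
    have h1 : Real.sqrt (c ^ 2 * Real.log L) = c * Real.sqrt (Real.log L) := by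
      rw [Real.sqrt_mul (sq_nonneg c), Real.sqrt_sq (le_of_lt hc0)]
    rw [← h1]
    exact Real.sqrt_le_sqrt hI
  have hLD : L ^ D * L ^ (-D) = 1 := by
    rw [← Real.rpow_add hL0, add_neg_cancel, Real.rpow_zero]
  have hsqne : Real.sqrt (Real.log L) ≠ 0 := ne_of_gt (Real.sqrt_pos.mpr hlogL)
  have hMC : (L ^ D / Real.sqrt (Real.log L)) * (c * Real.sqrt (Real.log L)) = M := by
    have e1 : (L ^ D / Real.sqrt (Real.log L)) * (L ^ (-D) * M * Real.sqrt (Real.log L))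
        = (L ^ D * L ^ (-D)) * M * (Real.sqrt (Real.log L) / Real.sqrt (Real.log L)) := by
      ring
    rw [hcdef, e1, hLD, div_self hsqne, one_mul, mul_one]
  calc M = (L ^ D / Real.sqrt (Real.log L)) * (c * Real.sqrt (Real.log L)) := hMC.symm
    _ ≤ (L ^ D / Real.sqrt (Real.log L)) * Real.sqrt (∫ u in Set.Ioc t₁ t₂, f u) := by
        apply mul_le_mul_of_nonneg_left hsqrt; positivity
end
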